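/- arXiv:2009.07830 — 3 statements merged into one kernel-verified Lean document; each statement's English description precedes it below -/
import Mathlib

section
/- Let G be a finite group, N a nonabelian minimal normal subgroup of G, p the largest prime dividing |N|, P a Sylow p-subgroup of N, and M a maximal subgroup of G with N_G(P) ≤ M. Then G = MN, the index |N : N ∩ M| is greater than 1, and |N : N ∩ M| is not a prime. -/
open scoped Pointwise

/-- A finite group is supersolvable if it admits a normal series (all terms normal
in the whole group) whose successive factors are cyclic. -/
def IsSupersolvable (G : Type*) [Group G] : Prop :=
  ∃ (n : ℕ) (s : Fin (n + 1) → Subgroup G) (hs : ∀ i, (s i).Normal),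
    Monotone s ∧ s 0 = ⊥ ∧ s (Fin.last n) = ⊤ ∧
    ∀ i : Fin n,
      haveI : ((s i.castSucc).subgroupOf (s i.succ)).Normal :=
        (hs i.castSucc).subgroupOf (s i.succ)
      IsCyclic (↥(s i.succ) ⧸ (s i.castSucc).subgroupOf (s i.succ))

/-- `N` is a minimal normal subgroup of `G`. -/
def IsMinimalNormal {G : Type*} [Group G] (N : Subgroup G) : Prop :=
  N.Normal ∧ N ≠ ⊥ ∧ ∀ K : Subgroup G, K.Normal → K ≤ N → K = ⊥ ∨ K = N

/-- The socle: the subgroup generated by all minimal normal subgroups. -/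
def socle (G : Type*) [Group G] : Subgroup G :=
  ⨆ N ∈ {N : Subgroup G | IsMinimalNormal N}, N

/-- The generalized Fitting subgroup `F̃(G)`: the preimage of `Soc(G/Φ(G))`. -/
def genFitting (G : Type*) [Group G] : Subgroup G :=
  (socle (G ⧸ frattini G)).comap (QuotientGroup.mk' (frattini G))

/-- The Fitting subgroup: the subgroup generated by all nilpotent normal subgroups. -/
def fitting (G : Type*) [Group G] : Subgroup G :=
  ⨆ N ∈ {N : Subgroup G | N.Normal ∧ Group.IsNilpotent N}, N

/-- If `K` is a normal subgroup of a minimal normal subgroup `N` of `G` whose index in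
`N` is not divisible by `p`, where `p ∣ |N|`, then `K = N`. -/
lemma aux_normal_index_not_dvd {G : Type*} [Group G] [Finite G] (N : Subgroup G)
    (hmin : IsMinimalNormal N) (p : ℕ) [Fact p.Prime] (hdvd : p ∣ Nat.card N)
    (P : Sylow p ↥N) (K : Subgroup ↥N) (hK : K.Normal)
    (hp : ¬ p ∣ K.index) : K = ⊤ := by
  haveI := hmin.1
  haveI := hK
  set Q : Subgroup G := (P : Subgroup ↥N).map N.subtype with hQdef
  have hQN : Q ≤ N := Subgroup.map_subtype_le _
  -- Q is nontrivial
  have hcardP : Nat.card (P : Subgroup ↥N) = p ^ (Nat.card ↥N).factorization p :=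
    P.card_eq_multiplicity
  have hfact : 0 < (Nat.card ↥N).factorization p :=
    Nat.Prime.factorization_pos_of_dvd Fact.out Nat.card_pos.ne' hdvd
  have hPbot : (P : Subgroup ↥N) ≠ ⊥ := by
    intro h
    have := Subgroup.card_eq_one.mpr h
    rw [hcardP] at this
    have hp1 : p ^ (Nat.card ↥N).factorization p ≠ 1 :=
      Nat.one_lt_pow hfact.ne' (Fact.out : p.Prime).one_lt |>.ne'
    exact hp1 this
  have hQbot : Q ≠ ⊥ := by
    intro h
    exact hPbot ((Subgroup.map_eq_bot_iff_of_injective _ N.subtype_injective).mp h)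
  -- the normal closure of Q equals N
  have hTle : Subgroup.normalClosure (Q : Set G) ≤ N :=
    Subgroup.normalClosure_le_normal hQN
  have hTN : Subgroup.normalClosure (Q : Set G) = N := by
    rcases hmin.2.2 _ Subgroup.normalClosure_normal hTle with h | h
    · exact absurd (le_bot_iff.mp (h ▸ Subgroup.le_normalClosure)) hQbot
    · exact h
  -- every conjugate of Q lands in K (mapped into G)
  have hclos : Subgroup.normalClosure (Q : Set G) ≤ K.map N.subtype := by
    apply (Subgroup.closure_le _).mpr
    intro x hx
    rw [Group.mem_conjugatesOfSet_iff] at hx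
    obtain ⟨a, haQ, hconj⟩ := hx
    obtain ⟨g, hg⟩ := isConj_iff.mp hconj
    -- x = g * a * g⁻¹
    set S : Subgroup G := Q.map (MulAut.conj g).toMonoidHom with hSdef
    have hSp : IsPGroup p S := (P.isPGroup'.map N.subtype).map _
    have hSN : S ≤ N := by
      rintro _ ⟨q, hq, rfl⟩
      exact hmin.1.conj_mem q (hQN hq) g
    have hS'p : IsPGroup p (S.subgroupOf N) :=
      hSp.of_equiv (Subgroup.subgroupOfEquivOfLe hSN).symm
    have hL : IsPGroup p ((S.subgroupOf N).map (QuotientGroup.mk' K)) :=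
      hS'p.map _
    obtain ⟨n, hn⟩ := IsPGroup.iff_card.mp hL
    have hn0 : n = 0 := by
      by_contra hne
      apply hp
      have h1 : p ∣ Nat.card ((S.subgroupOf N).map (QuotientGroup.mk' K)) := by
        rw [hn]
        exact dvd_pow_self p hne
      have h2 : Nat.card ((S.subgroupOf N).map (QuotientGroup.mk' K)) ∣
          Nat.card (↥N ⧸ K) := Subgroup.card_subgroup_dvd_card _
      rw [Subgroup.index_eq_card]
      exact h1.trans h2
    have hbot : (S.subgroupOf N).map (QuotientGroup.mk' K) = ⊥ := by
      apply Subgroup.card_eq_one.mp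
      rw [hn, hn0, pow_zero]
    have hSK : S.subgroupOf N ≤ K := by
      have := (Subgroup.map_eq_bot_iff _).mp hbot
      rwa [QuotientGroup.ker_mk'] at this
    -- now x ∈ S, x ∈ N, so x ∈ K.map N.subtype
    have hxS : x ∈ S := by
      refine ⟨a, haQ, ?_⟩
      simpa using hg
    have hxN : x ∈ N := hSN hxS
    have : (⟨x, hxN⟩ : ↥N) ∈ S.subgroupOf N := hxS
    exact ⟨⟨x, hxN⟩, hSK this, rfl⟩
  -- conclude K = ⊤
  ext y
  simp only [Subgroup.mem_top, iff_true]
  have hy' : (y : G) ∈ Subgroup.normalClosure (Q : Set G) := by rw [hTN]; exact y.2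
  have hy : (y : G) ∈ K.map N.subtype := hclos hy'
  obtain ⟨k, hk, hky⟩ := hy
  have : k = y := Subtype.ext hky
  rwa [this] at hk

/-- Let `N` be a nonabelian minimal normal subgroup of a finite group `G`, `p` the
largest prime dividing `|N|`, `P` a Sylow `p`-subgroup of `N`, and `M` a maximal
subgroup of `G` containing `N_G(P)`.  Then `G = MN`, and `|N : N ∩ M|` is greater
than 1 and is not a prime. -/
theorem statement5 {G : Type*} [Group G] [Finite G] (N : Subgroup G)
    (hmin : IsMinimalNormal N)
    (hnonab : ¬ ∀ a ∈ N, ∀ b ∈ N, a * b = b * a)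
    (p : ℕ) [Fact p.Prime] (hdvd : p ∣ Nat.card N)
    (hmaxprime : ∀ q : ℕ, q.Prime → q ∣ Nat.card N → q ≤ p)
    (P : Sylow p ↥N)
    (M : Subgroup G) (hM : IsCoatom M)
    (hnorm : Subgroup.normalizer (((P : Subgroup ↥N).map N.subtype : Subgroup G) : Set G) ≤ M) :
    (M : Set G) * (N : Set G) = Set.univ ∧
    1 < M.relIndex N ∧ ¬ (M.relIndex N).Prime := by
  haveI := hmin.1
  -- Frattini argument
  have hfr : Subgroup.normalizer (((P : Subgroup ↥N).map N.subtype : Subgroup G) : Set G) ⊔ N = ⊤ :=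
    Sylow.normalizer_sup_eq_top P
  have htop : M ⊔ N = ⊤ :=
    top_unique (hfr ▸ sup_le_sup_right hnorm N)
  have hmul : (M : Set G) * (N : Set G) = Set.univ := by
    rw [← Subgroup.mul_normal M N, htop, Subgroup.coe_top]
  set H : Subgroup ↥N := M.subgroupOf N with hHdef
  have hrelindex : M.relIndex N = H.index := rfl
  -- P ≤ H
  have hPH : (P : Subgroup ↥N) ≤ H := by
    intro x hx
    exact hnorm (Subgroup.le_normalizer ⟨x, hx, rfl⟩)
  -- H ≠ ⊤
  have hHne : H ≠ ⊤ := by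
    intro h
    apply hM.1
    have hNM : N ≤ M := fun n hn => by
      have : (⟨n, hn⟩ : ↥N) ∈ H := h ▸ Subgroup.mem_top _
      exact this
    rw [← htop, sup_eq_left.mpr hNM]
  have h1lt : 1 < H.index := Subgroup.one_lt_index_of_ne_top hHne
  refine ⟨hmul, h1lt, ?_⟩
  intro hr
  set r := H.index with hrdef
  -- r ≤ p
  have hrN : r ∣ Nat.card ↥N := Subgroup.index_dvd_card H
  have hrle : r ≤ p := hmaxprime r hr hrN
  -- p ∤ r
  have hpP : ¬ p ∣ (P : Subgroup ↥N).index := P.not_dvd_index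
  have hpr : ¬ p ∣ r := fun h => hpP (h.trans (Subgroup.index_dvd_of_le hPH))
  have hrltp : r < p := lt_of_le_of_ne hrle (by rintro rfl; exact hpr dvd_rfl)
  -- the normal core
  set K := H.normalCore with hKdef
  have hKne : K ≠ ⊤ := fun h => hHne (top_unique (h ▸ H.normalCore_le))
  have hpK : p ∣ K.index := by
    by_contra hnd
    exact hKne (aux_normal_index_not_dvd N hmin p hdvd P K H.normalCore_normal hnd)
  -- card of N / K divides r !
  haveI : Fintype (↥N ⧸ H) := Fintype.ofFinite _
  have hKdvd : K.index ∣ Nat.factorial r := by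
    rw [Subgroup.index_eq_card]
    have hker : K = (MulAction.toPermHom ↥N (↥N ⧸ H)).ker := Subgroup.normalCore_eq_ker H
    have hinj : Function.Injective
        (QuotientGroup.kerLift (MulAction.toPermHom ↥N (↥N ⧸ H))) :=
      QuotientGroup.kerLift_injective _
    have hdvd2 : Nat.card (↥N ⧸ (MulAction.toPermHom ↥N (↥N ⧸ H)).ker) ∣
        Nat.card (Equiv.Perm (↥N ⧸ H)) :=
      Subgroup.card_dvd_of_injective _ hinj
    have hcardperm : Nat.card (Equiv.Perm (↥N ⧸ H)) = Nat.factorial r := by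
      classical
      rw [Nat.card_eq_fintype_card, Fintype.card_perm, ← Nat.card_eq_fintype_card,
        ← Subgroup.index_eq_card]
    rw [hker]
    exact hcardperm ▸ hdvd2
  have hple : p ≤ r := (Nat.Prime.dvd_factorial Fact.out).mp (hpK.trans hKdvd)
  exact absurd hple (not_le.mpr hrltp)
end

section
/- Let V = (ZMod 5)^(Fin 5) be the natural permutation module for the alternating group A₅ on five letters over the field with 5 elements, where A₅ acts by permuting coordinates. Then every nonzero A₅-invariant submodule of V contains the all-ones vector (1,1,1,1,1); in particular, the span of the all-ones vector (which is one-dimensional and A₅-invariant) is the unique minimal nonzero A₅-submodule of V, i.e. the socle of V is one-dimensional. -/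
def Nop (v : Fin 5 → ZMod 5) : Fin 5 → ZMod 5 :=
  fun i => v ((finRotate 5)⁻¹ i) - v i

lemma rsub : ∀ i : Fin 5, (finRotate 5)⁻¹ i = i - 1 := by decide

lemma five_sub : ∀ i : Fin 5, i - 1 - 1 - 1 - 1 - 1 = i := by decide

lemma h5 : (5 : ZMod 5) = 0 := by decide

lemma key (v : Fin 5 → ZMod 5) : Nop (Nop (Nop (Nop (Nop v)))) = 0 := by
  funext i
  simp only [Nop, rsub, five_sub, Pi.zero_apply]
  linear_combination (v (i-1) - v (i-1-1-1-1) + 2*v (i-1-1-1) - 2*v (i-1-1)) * h5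

lemma const_of_N (w : Fin 5 → ZMod 5) (h : Nop w = 0) : w = fun _ => w 0 := by
  have e : ∀ i : Fin 5, w (i - 1) = w i := by
    intro i; simpa [Nop, rsub, sub_eq_zero] using congrFun h i
  have f1 : w 0 = w 1 := by simpa using e 1
  have f2 : w 1 = w 2 := by simpa using e 2
  have f3 : w 2 = w 3 := by simpa using e 3
  have f4 : w 3 = w 4 := by simpa using e 4
  funext i
  fin_cases i
  · rfl
  · simpa using f1.symm
  · simpa using (f2.symm.trans f1.symm)
  · simpa using (f3.symm.trans (f2.symm.trans f1.symm))
  · simpa using (f4.symm.trans (f3.symm.trans (f2.symm.trans f1.symm)))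

lemma rot_mem : finRotate 5 ∈ alternatingGroup (Fin 5) := by
  rw [Equiv.Perm.mem_alternatingGroup, sign_finRotate]; decide

lemma ones_ne_zero : (fun _ => 1 : Fin 5 → ZMod 5) ≠ 0 := by
  intro h; exact absurd (congrFun h 0) (by decide)

lemma main (U : Submodule (ZMod 5) (Fin 5 → ZMod 5))
    (hU : ∀ σ ∈ alternatingGroup (Fin 5), ∀ v ∈ U, (fun i => v (σ⁻¹ i)) ∈ U)
    (hne : U ≠ ⊥) : (fun _ => 1 : Fin 5 → ZMod 5) ∈ U := by
  have hNmem : ∀ v ∈ U, Nop v ∈ U := by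
    intro v hv
    have h1 := hU (finRotate 5) rot_mem v hv
    have := U.sub_mem h1 hv
    convert this using 1
    rfl
  have aux : ∀ n : ℕ, ∀ v : Fin 5 → ZMod 5, Nop^[n] v = 0 → v ∈ U → v ≠ 0 →
      (fun _ => 1 : Fin 5 → ZMod 5) ∈ U := by
    intro n
    induction n with
    | zero => intro v h0 _ hvne; exact absurd h0 hvne
    | succ n ih =>
      intro v h0 hv hvne
      by_cases hN : Nop v = 0
      · have hc := const_of_N v hN
        have hv0 : v 0 ≠ 0 := by
          intro h; apply hvne; rw [hc, h]; rfl
        have : (v 0)⁻¹ • v ∈ U := U.smul_mem _ hv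
        convert this using 1
        funext i
        have hvi : v i = v 0 := by rw [hc]
        have hsm : ((v 0)⁻¹ • v) i = (v 0)⁻¹ * v i := rfl
        rw [hsm, hvi]
        haveI : Fact (Nat.Prime 5) := ⟨by norm_num⟩
        exact (inv_mul_cancel₀ hv0).symm
      · exact ih (Nop v) (by rw [← Function.iterate_succ_apply]; exact h0)
          (hNmem v hv) hN
  obtain ⟨v, hv, hvne⟩ := Submodule.ne_bot_iff U |>.mp hne
  exact aux 5 v (key v) hv hvne

/-- In the permutation module `V = (ZMod 5)^(Fin 5)` for `A₅` (acting by
`(σ • v) i = v (σ⁻¹ i)`), every nonzero `A₅`-invariant submodule contains the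
all-ones vector; in particular the span of the all-ones vector is a
one-dimensional invariant submodule contained in every nonzero invariant
submodule (so the socle of `V` is one-dimensional). -/
theorem statement9 :
    (∀ U : Submodule (ZMod 5) (Fin 5 → ZMod 5),
      (∀ σ ∈ alternatingGroup (Fin 5), ∀ v ∈ U, (fun i => v (σ⁻¹ i)) ∈ U) →
      U ≠ ⊥ → (fun _ => 1 : Fin 5 → ZMod 5) ∈ U) ∧
    Module.finrank (ZMod 5)
      (Submodule.span (ZMod 5) {(fun _ => 1 : Fin 5 → ZMod 5)}) = 1 ∧
    (∀ σ ∈ alternatingGroup (Fin 5),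
      ∀ v ∈ Submodule.span (ZMod 5) {(fun _ => 1 : Fin 5 → ZMod 5)},
        (fun i => v (σ⁻¹ i)) ∈ Submodule.span (ZMod 5) {(fun _ => 1 : Fin 5 → ZMod 5)}) ∧
    (∀ U : Submodule (ZMod 5) (Fin 5 → ZMod 5),
      (∀ σ ∈ alternatingGroup (Fin 5), ∀ v ∈ U, (fun i => v (σ⁻¹ i)) ∈ U) →
      U ≠ ⊥ → Submodule.span (ZMod 5) {(fun _ => 1 : Fin 5 → ZMod 5)} ≤ U) := by
  haveI : Fact (Nat.Prime 5) := ⟨by norm_num⟩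
  refine ⟨main, ?_, ?_, ?_⟩
  · exact finrank_span_singleton ones_ne_zero
  · intro σ hσ v hv
    obtain ⟨c, hc⟩ := Submodule.mem_span_singleton.mp hv
    rw [Submodule.mem_span_singleton]
    refine ⟨c, ?_⟩
    funext i
    have h1 : v (σ⁻¹ i) = c := by rw [← hc]; simp
    have h2 : (c • (fun _ => 1 : Fin 5 → ZMod 5)) i = c := by simp
    rw [h2, h1]
  · intro U hU hne
    rw [Submodule.span_singleton_le_iff_mem]
    exact main U hU hne
end

section
/- Let G be a finite group, N a normal subgroup of G, and M a maximal subgroup of G with G = MN such that the index |N : N ∩ M| is a prime q. If in addition N is a minimal normal subgroup of G isomorphic to a direct power of a nonabelian simple group S, then every prime divisor of |S| is at most q. -/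
open scoped Pointwise

lemma aux_single {k : ℕ} {S : Type*} [Group S] (hS : IsSimpleGroup S)
    (hnab : ¬ ∀ a b : S, a * b = b * a)
    (P : Subgroup (Fin k → S)) (hP : P.Normal) (hne : P ≠ ⊤) :
    ∃ i, ∀ p ∈ P, p i = 1 := by
  by_contra hcon
  push_neg at hcon
  apply hne
  push_neg at hnab
  obtain ⟨a, b, hab⟩ := hnab
  have key : ∀ (i : Fin k) (s : S), Pi.mulSingle i s ∈ P := by
    intro i
    obtain ⟨p0, hp0, hp0i⟩ := hcon i
    -- projection onto i-th coordinate is surjective on P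
    have hproj : P.map (Pi.evalMonoidHom (fun _ => S) i) = ⊤ := by
      have hnorm : (P.map (Pi.evalMonoidHom (fun _ => S) i)).Normal :=
        hP.map _ (fun s => ⟨Pi.mulSingle i s, by simp⟩)
      rcases hS.eq_bot_or_eq_top_of_normal _ hnorm with hb | ht
      · exact absurd (hb ▸ Subgroup.mem_map_of_mem _ hp0) (by simpa using hp0i)
      · exact ht
    -- T = elements s with mulSingle i s ∈ P
    set T : Subgroup S := P.comap (MonoidHom.mulSingle (fun _ : Fin k => S) i) with hT
    have hTnorm : T.Normal := by
      constructor
      intro x hx g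
      have : (MonoidHom.mulSingle (fun _ : Fin k => S) i) (g * x * g⁻¹)
          = Pi.mulSingle i g * (MonoidHom.mulSingle (fun _ : Fin k => S) i) x
            * (Pi.mulSingle i g)⁻¹ := by
        simp [MonoidHom.mulSingle_apply, ← Pi.mulSingle_mul, ← Pi.mulSingle_inv,
          mul_assoc]
      rw [hT] at hx ⊢
      simp only [Subgroup.mem_comap] at hx ⊢
      rw [this]
      exact hP.conj_mem _ hx _
    -- commutators [p i, t] belong to T for p ∈ P
    have hcomm : ∀ p ∈ P, ∀ t : S, p i * t * (p i)⁻¹ * t⁻¹ ∈ T := by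
      intro p hp t
      have hc : p * (Pi.mulSingle i t * p⁻¹ * (Pi.mulSingle i t)⁻¹) ∈ P :=
        P.mul_mem hp (hP.conj_mem _ (P.inv_mem hp) _)
      have heq : p * (Pi.mulSingle i t * p⁻¹ * (Pi.mulSingle i t)⁻¹)
          = Pi.mulSingle i (p i * t * (p i)⁻¹ * t⁻¹) := by
        funext j
        by_cases hji : j = i
        · subst hji
          simp [mul_assoc]
        · simp only [Pi.mul_apply, Pi.inv_apply, Pi.mulSingle_eq_of_ne hji]
          group
      rw [hT, Subgroup.mem_comap]
      simp only [MonoidHom.mulSingle_apply]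
      rw [← heq]
      exact hc
    -- T is nontrivial
    have hTtop : T = ⊤ := by
      rcases hS.eq_bot_or_eq_top_of_normal T hTnorm with hb | ht
      · exfalso
        obtain ⟨p, hp, hpi⟩ : ∃ p ∈ P, p i = a := by
          have : a ∈ P.map (Pi.evalMonoidHom (fun _ => S) i) := hproj ▸ Subgroup.mem_top a
          simpa using this
        have := hcomm p hp b
        rw [hpi, hb, Subgroup.mem_bot] at this
        rw [mul_inv_eq_one, mul_inv_eq_iff_eq_mul] at this
        exact hab this
      · exact ht
    intro s
    have hs : s ∈ T := hTtop ▸ Subgroup.mem_top s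
    rw [hT, Subgroup.mem_comap] at hs
    simpa using hs
  rw [eq_top_iff]
  intro x _
  exact Subgroup.pi_mem_of_mulSingle_mem x (fun i => key i (x i))

/-- Let `G` be a finite group, `N ⊴ G`, and `M` a maximal subgroup of `G` with
`G = MN` and `|N : N ∩ M|` a prime `q`.  If moreover `N` is a minimal normal
subgroup of `G` isomorphic to a direct power of a nonabelian simple group `S`,
then every prime divisor of `|S|` is at most `q`. -/
theorem statement13 {G : Type*} [Group G] [Finite G] (N M : Subgroup G) [N.Normal]
    (hM : IsCoatom M) (hMN : (M : Set G) * (N : Set G) = Set.univ)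
    (q : ℕ) (hq : q.Prime) (hrel : M.relIndex N = q)
    (hmin : IsMinimalNormal N)
    (S : Type*) [Group S] [Finite S] (hS : IsSimpleGroup S)
    (hnab : ¬ ∀ a b : S, a * b = b * a)
    (k : ℕ) (hk : 0 < k) (hiso : Nonempty (↥N ≃* (Fin k → S))) :
    ∀ r : ℕ, r.Prime → r ∣ Nat.card S → r ≤ q := by
  intro r hr hrS
  obtain ⟨e⟩ := hiso
  set H : Subgroup N := M.subgroupOf N with hH
  have hHidx : H.index = q := hrel
  set K : Subgroup N := H.normalCore with hKdef
  haveI hKnorm : K.Normal := Subgroup.normalCore_normal H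
  -- K is proper
  have hKne : K ≠ ⊤ := by
    intro htop
    have hHtop : H = ⊤ := top_le_iff.mp (htop ▸ Subgroup.normalCore_le H)
    rw [hHtop, Subgroup.index_top] at hHidx
    exact hq.ne_one hHidx.symm
  -- |N ⧸ K| divides q!
  have hdvd1 : Nat.card (N ⧸ K) ∣ Nat.factorial q := by
    have hker : K = (MulAction.toPermHom N (N ⧸ H)).ker := Subgroup.normalCore_eq_ker H
    have e2 : (N ⧸ K) ≃* (MulAction.toPermHom N (N ⧸ H)).range :=
      (QuotientGroup.quotientMulEquivOfEq hker).trans (QuotientGroup.quotientKerEquivRange _)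
    rw [Nat.card_congr e2.toEquiv]
    have := Subgroup.card_subgroup_dvd_card (MulAction.toPermHom N (N ⧸ H)).range
    have hcard : Nat.card (Equiv.Perm (N ⧸ H)) = Nat.factorial q := by
      classical
      have hq1 : Nat.card (N ⧸ H) = q := hHidx
      haveI : Fintype (N ⧸ H) := Fintype.ofFinite _
      rw [Nat.card_eq_fintype_card, Fintype.card_perm, ← Nat.card_eq_fintype_card, hq1]
    rwa [hcard] at this
  -- transfer K to the product group
  set P : Subgroup (Fin k → S) := K.map e.toMonoidHom with hPdef
  have hPnorm : P.Normal := hKnorm.map e.toMonoidHom e.surjective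
  have hPne : P ≠ ⊤ := by
    intro htop
    apply hKne
    have : K.map e.toMonoidHom = (⊤ : Subgroup N).map e.toMonoidHom := by
      rw [← hPdef, htop, Subgroup.map_top_of_surjective _ e.surjective]
    exact Subgroup.map_injective e.injective this
  obtain ⟨i, hi⟩ := aux_single hS hnab P hPnorm hPne
  -- card of quotients agree
  have hcardQ : Nat.card ((Fin k → S) ⧸ P) = Nat.card (N ⧸ K) :=
    (Nat.card_congr (QuotientGroup.congr K P e rfl).toEquiv).symm
  -- |S| divides the card of the quotient
  have hdvd2 : Nat.card S ∣ Nat.card ((Fin k → S) ⧸ P) := by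
    have hle : ∀ x ∈ P, Pi.evalMonoidHom (fun _ => S) i x = 1 := fun x hx => hi x hx
    set φ := QuotientGroup.lift P (Pi.evalMonoidHom (fun _ => S) i) hle with hφ
    have hsurj : Function.Surjective φ := by
      intro s
      exact ⟨QuotientGroup.mk (Pi.mulSingle i s), by exact Pi.mulSingle_eq_same (M := fun _ : Fin k => S) i s⟩
    have e3 := QuotientGroup.quotientKerEquivOfSurjective φ hsurj
    have : Nat.card S = Nat.card (((Fin k → S) ⧸ P) ⧸ φ.ker) := (Nat.card_congr e3.toEquiv).symm
    rw [this]
    exact Subgroup.card_quotient_dvd_card _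
  have : r ∣ Nat.factorial q := hrS.trans (hdvd2.trans (by rw [hcardQ]; exact hdvd1))
  exact (Nat.Prime.dvd_factorial hr).mp this
end
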